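/- Let n ≥ 2 be an integer and let m, D be real numbers with 0 ≤ m ≤ D. Then D^n − n·D^{n−1}·m ≤ (D−m)^n ≤ D^n − n·D^{n−1}·m + ( (n−1)·2^{n−1}·e / (π·√n) )·D^{n−2}·m². -/

import Mathlib

open Real

private lemma bern_upper (n : ℕ) (t : ℝ) (h0 : 0 ≤ t) (h1 : t ≤ 1) :
    (1 - t) ^ n ≤ 1 - n * t + n * ((n : ℝ) - 1) / 2 * t ^ 2 := by
  induction n with
  | zero => simp
  | succ k ih =>
    have hk : (0:ℝ) ≤ k := Nat.cast_nonneg k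
    have h1t : (0:ℝ) ≤ 1 - t := by linarith
    have hc : (0:ℝ) ≤ (k:ℝ) * ((k:ℝ) - 1) := by
      rcases Nat.eq_zero_or_pos k with h | h
      · simp [h]
      · have : (1:ℝ) ≤ k := by exact_mod_cast h
        nlinarith
    have hmul := mul_le_mul_of_nonneg_right ih h1t
    have ht3 : (0:ℝ) ≤ (k:ℝ) * ((k:ℝ) - 1) * t ^ 3 :=
      mul_nonneg hc (pow_nonneg h0 3)
    calc (1 - t) ^ (k + 1) = (1 - t) ^ k * (1 - t) := pow_succ _ _
      _ ≤ (1 - k * t + k * ((k:ℝ) - 1) / 2 * t ^ 2) * (1 - t) := hmul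
      _ ≤ 1 - (↑(k+1)) * t + (↑(k+1)) * ((↑(k+1) : ℝ) - 1) / 2 * t ^ 2 := by
          push_cast
          nlinarith [ht3]

private lemma keyineq : ∀ n : ℕ, 2 ≤ n → Real.pi * n * Real.sqrt n ≤ Real.exp 1 * 2 ^ n := by
  intro n hn
  induction n, hn using Nat.le_induction with
  | base =>
    have hs : Real.sqrt 2 ≤ 1.5 := by
      rw [show (1.5:ℝ) = Real.sqrt (1.5 ^ 2) from (Real.sqrt_sq (by norm_num)).symm]
      exact Real.sqrt_le_sqrt (by norm_num)
    have hpi := Real.pi_lt_d2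
    have he := Real.exp_one_gt_d9
    have hs0 := Real.sqrt_nonneg 2
    have hpi0 := Real.pi_pos
    push_cast
    nlinarith
  | succ n hn ih =>
    have hn2 : (2:ℝ) ≤ n := by exact_mod_cast hn
    have h3 : ((n:ℝ) + 1) ^ 3 ≤ 4 * (n:ℝ) ^ 3 := by
      have h := sub_nonneg.mpr hn2
      nlinarith [mul_nonneg (mul_nonneg h h) h, mul_nonneg h h, h]
    have hsq := Real.sqrt_le_sqrt h3
    have e1 : Real.sqrt (((n:ℝ) + 1) ^ 3) = ((n:ℝ) + 1) * Real.sqrt ((n:ℝ) + 1) := by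
      rw [show ((n:ℝ) + 1) ^ 3 = ((n:ℝ) + 1) ^ 2 * ((n:ℝ) + 1) by ring,
        Real.sqrt_mul (sq_nonneg _), Real.sqrt_sq (by linarith)]
    have e2 : Real.sqrt (4 * (n:ℝ) ^ 3) = 2 * (n:ℝ) * Real.sqrt n := by
      rw [show 4 * (n:ℝ) ^ 3 = (2 * (n:ℝ)) ^ 2 * n by ring,
        Real.sqrt_mul (sq_nonneg _), Real.sqrt_sq (by linarith)]
    rw [e1, e2] at hsq
    have hpi0 := Real.pi_pos
    have key : Real.pi * (((n:ℝ)) + 1) * Real.sqrt ((n:ℝ) + 1) ≤ 2 * (Real.pi * n * Real.sqrt n) := by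
      nlinarith
    calc Real.pi * (↑(n+1)) * Real.sqrt (↑(n+1))
        = Real.pi * (((n:ℝ)) + 1) * Real.sqrt ((n:ℝ) + 1) := by push_cast; ring
      _ ≤ 2 * (Real.pi * n * Real.sqrt n) := key
      _ ≤ 2 * (Real.exp 1 * 2 ^ n) := by linarith
      _ = Real.exp 1 * 2 ^ (n + 1) := by ring

theorem stmt_18 (n : ℕ) (hn : 2 ≤ n) (m D : ℝ) (hm : 0 ≤ m) (hmD : m ≤ D) :
    D ^ n - (n : ℝ) * D ^ (n - 1) * m ≤ (D - m) ^ n ∧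
    (D - m) ^ n ≤ D ^ n - (n : ℝ) * D ^ (n - 1) * m
      + (((n : ℝ) - 1) * 2 ^ (n - 1) * Real.exp 1 / (Real.pi * Real.sqrt n))
        * D ^ (n - 2) * m ^ 2 := by
  obtain ⟨k, rfl⟩ : ∃ k, n = k + 2 := ⟨n - 2, by omega⟩
  have hD0 : 0 ≤ D := hm.trans hmD
  rcases eq_or_lt_of_le hD0 with hD | hD
  · -- D = 0, hence m = 0
    have hm0 : m = 0 := le_antisymm (hmD.trans hD.symm.le) hm
    subst hm0
    rw [← hD]
    norm_num [zero_pow]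
  · -- 0 < D
    set t : ℝ := m / D with ht
    have ht0 : 0 ≤ t := div_nonneg hm hD.le
    have ht1 : t ≤ 1 := (div_le_one hD).mpr hmD
    have hDne : D ≠ 0 := ne_of_gt hD
    have hDm : D - m = D * (1 - t) := by
      rw [ht, mul_sub, mul_one, mul_div_cancel₀ _ hDne]
    have e1 : D ^ (k + 2) * t = D ^ (k + 1) * m := by
      rw [ht]; field_simp; ring
    have e2 : D ^ (k + 2) * t ^ 2 = D ^ k * m ^ 2 := by
      rw [ht]; field_simp; ring
    have hDp : (0:ℝ) ≤ D ^ (k + 2) := pow_nonneg hD0 _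
    have hcast : ((k + 2 : ℕ) : ℝ) = (k:ℝ) + 2 := by push_cast; ring
    have hexp : (D - m) ^ (k + 2) = D ^ (k + 2) * (1 - t) ^ (k + 2) := by
      rw [hDm, mul_pow]
    have hsub1 : k + 2 - 1 = k + 1 := rfl
    have hsub2 : k + 2 - 2 = k := rfl
    constructor
    · -- lower bound
      have hb : 1 + (k + 2 : ℕ) * (-t) ≤ (1 + (-t)) ^ (k + 2) :=
        one_add_mul_le_pow (by linarith) (k + 2)
      have hb' : 1 - ((k:ℝ) + 2) * t ≤ (1 - t) ^ (k + 2) := by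
        rw [show (1:ℝ) + (-t) = 1 - t by ring] at hb
        calc 1 - ((k:ℝ) + 2) * t = 1 + (k + 2 : ℕ) * (-t) := by push_cast; ring
          _ ≤ _ := hb
      have := mul_le_mul_of_nonneg_left hb' hDp
      rw [hsub1, hcast]
      calc D ^ (k + 2) - ((k:ℝ) + 2) * D ^ (k + 1) * m
          = D ^ (k + 2) * (1 - ((k:ℝ) + 2) * t) := by
            rw [mul_sub, mul_one]
            rw [show D ^ (k+2) * (((k:ℝ)+2) * t) = ((k:ℝ)+2) * (D ^ (k+2) * t) by ring, e1]
            ring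
        _ ≤ D ^ (k + 2) * (1 - t) ^ (k + 2) := this
        _ = (D - m) ^ (k + 2) := hexp.symm
    · -- upper bound
      have hb := bern_upper (k + 2) t ht0 ht1
      have hb' := mul_le_mul_of_nonneg_left hb hDp
      rw [hsub1, hsub2, hcast]
      have hsqpos : 0 < Real.sqrt ((k:ℝ) + 2) := Real.sqrt_pos.mpr (by positivity)
      have hpi0 := Real.pi_pos
      have hkey := keyineq (k + 2) (by omega)
      rw [hcast] at hkey
      -- constant comparison
      have hconst : ((k:ℝ) + 2) * (((k:ℝ) + 2) - 1) / 2
          ≤ (((k:ℝ) + 2) - 1) * 2 ^ (k + 1) * Real.exp 1 / (Real.pi * Real.sqrt ((k:ℝ) + 2)) := by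
        rw [div_le_div_iff₀ (by norm_num) (by positivity)]
        have hk1 : (0:ℝ) ≤ (k:ℝ) + 1 := by positivity
        have := mul_le_mul_of_nonneg_left hkey hk1
        calc ((k:ℝ) + 2) * (((k:ℝ) + 2) - 1) * (Real.pi * Real.sqrt ((k:ℝ) + 2))
            = ((k:ℝ) + 1) * (Real.pi * ((k:ℝ) + 2) * Real.sqrt ((k:ℝ) + 2)) := by ring
          _ ≤ ((k:ℝ) + 1) * (Real.exp 1 * 2 ^ (k + 2)) := this
          _ = (((k:ℝ) + 2) - 1) * 2 ^ (k + 1) * Real.exp 1 * 2 := by ring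
      have hDm2 : (0:ℝ) ≤ D ^ k * m ^ 2 := by positivity
      have hsqn : Real.sqrt (↑(k + 2)) = Real.sqrt ((k:ℝ) + 2) := by push_cast; ring_nf
      rw [hexp]
      calc D ^ (k + 2) * (1 - t) ^ (k + 2)
          ≤ D ^ (k + 2) * (1 - ((k:ℝ) + 2) * t + ((k:ℝ) + 2) * (((k:ℝ) + 2) - 1) / 2 * t ^ 2) := by
            convert hb' using 2
            · rfl
            · push_cast; ring
        _ = D ^ (k + 2) - ((k:ℝ) + 2) * D ^ (k + 1) * m
            + ((k:ℝ) + 2) * (((k:ℝ) + 2) - 1) / 2 * (D ^ k * m ^ 2) := by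
            rw [show D ^ (k+2) * (1 - ((k:ℝ)+2)*t + ((k:ℝ)+2)*(((k:ℝ)+2)-1)/2*t^2)
              = D ^ (k+2) - ((k:ℝ)+2) * (D ^ (k+2) * t)
                + ((k:ℝ)+2)*(((k:ℝ)+2)-1)/2 * (D ^ (k+2) * t^2) by ring, e1, e2]
            ring
        _ ≤ D ^ (k + 2) - ((k:ℝ) + 2) * D ^ (k + 1) * m
            + (((k:ℝ) + 2) - 1) * 2 ^ (k + 1) * Real.exp 1 / (Real.pi * Real.sqrt (↑(k + 2)))
              * (D ^ k * m ^ 2) := by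
            rw [hsqn]
            have := mul_le_mul_of_nonneg_right hconst hDm2
            linarith
        _ = _ := by rw [hsqn]; ring
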